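/- arXiv:math/0406457 — 2 statements merged into one kernel-verified Lean document; each statement's English description precedes it below -/
import Mathlib

section
/- Fix k with 1 ≤ k ≤ g. There exists a function v : ℝ^g → ℝ such that 𝓛(𝓐_k f) − 𝓐_k(𝓛 f) = v·f for every smooth f : ℝ^g → ℝ if and only if ∂_x u_k = ∂_k u_1; and in that case 𝓛(𝓐_k f) − 𝓐_k(𝓛 f) = (1/4)(u_k''' − 2u_1'u_k − 4u_1u_k')·f for every smooth f. -/
open scoped BigOperators

/-- Partial derivative `∂_i` (1-based index) on functions of `t : Fin g → ℝ`;
`∂_i ≡ 0` for `i = 0` or `i > g` (in particular `∂_{g+1} ≡ 0`). -/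
noncomputable def pd {g : ℕ} {E : Type*} [NormedAddCommGroup E] [NormedSpace ℝ E]
    (i : ℕ) (f : (Fin g → ℝ) → E) : (Fin g → ℝ) → E :=
  fun t => if h : 1 ≤ i ∧ i ≤ g then
    fderiv ℝ f t (Pi.single (⟨i - 1, by omega⟩ : Fin g) 1) else 0

/-- The Schrödinger operator `𝓛 f = ∂_x² f − u₁·f`. -/
noncomputable def opL {g : ℕ} (u : ℕ → (Fin g → ℝ) → ℝ)
    (f : (Fin g → ℝ) → ℝ) : (Fin g → ℝ) → ℝ :=
  fun t => pd 1 (pd 1 f) t - u 1 t * f t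

/-- `𝓐_k f = ∂_x²∂_k f − (1/2)(u₁·∂_k f + ∂_k(u₁·f)) − (1/4)(u_k·∂_x f + ∂_x(u_k·f))`. -/
noncomputable def opA {g : ℕ} (u : ℕ → (Fin g → ℝ) → ℝ) (k : ℕ)
    (f : (Fin g → ℝ) → ℝ) : (Fin g → ℝ) → ℝ :=
  fun t => pd 1 (pd 1 (pd k f)) t
    - (1/2 : ℝ) * (u 1 t * pd k f t + pd k (fun s => u 1 s * f s) t)
    - (1/4 : ℝ) * (u k t * pd 1 f t + pd 1 (fun s => u k s * f s) t)

/-- `𝓤_k f = 𝓐_k f − ∂_{k+1} f` (so `𝓤_g = 𝓐_g` since `∂_{g+1} ≡ 0`). -/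
noncomputable def opU {g : ℕ} (u : ℕ → (Fin g → ℝ) → ℝ) (k : ℕ)
    (f : (Fin g → ℝ) → ℝ) : (Fin g → ℝ) → ℝ :=
  fun t => opA u k f t - pd (k+1) f t


noncomputable def Dd {g : ℕ} (i : Fin g) (f : (Fin g → ℝ) → ℝ) : (Fin g → ℝ) → ℝ :=
  fun t => fderiv ℝ f t (Pi.single i 1)

lemma smooth_diff {g : ℕ} {f : (Fin g → ℝ) → ℝ} (hf : ContDiff ℝ (⊤ : ℕ∞) f) :
    Differentiable ℝ f := hf.differentiable (by simp)

@[fun_prop]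
lemma Dd_contDiff {g : ℕ} (i : Fin g) {f : (Fin g → ℝ) → ℝ}
    (hf : ContDiff ℝ (⊤ : ℕ∞) f) : ContDiff ℝ (⊤ : ℕ∞) (Dd i f) := by
  exact (hf.fderiv_right (m := (⊤ : ℕ∞)) (by exact_mod_cast le_top)).clm_apply contDiff_const

lemma Dd_const {g : ℕ} (i : Fin g) (c : ℝ) :
    Dd i (fun _ : Fin g → ℝ => c) = fun _ => (0 : ℝ) := by
  funext x; simp [Dd]

lemma Dd_sub {g : ℕ} (i : Fin g) {A B : (Fin g → ℝ) → ℝ}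
    (hA : ContDiff ℝ (⊤ : ℕ∞) A) (hB : ContDiff ℝ (⊤ : ℕ∞) B) :
    Dd i (fun t => A t - B t) = fun x => Dd i A x - Dd i B x := by
  funext x
  simp only [Dd]
  rw [fderiv_fun_sub ((smooth_diff hA) x) ((smooth_diff hB) x)]
  simp

lemma Dd_add {g : ℕ} (i : Fin g) {A B : (Fin g → ℝ) → ℝ}
    (hA : ContDiff ℝ (⊤ : ℕ∞) A) (hB : ContDiff ℝ (⊤ : ℕ∞) B) :
    Dd i (fun t => A t + B t) = fun x => Dd i A x + Dd i B x := by
  funext x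
  simp only [Dd]
  rw [fderiv_fun_add ((smooth_diff hA) x) ((smooth_diff hB) x)]
  simp

lemma Dd_mul {g : ℕ} (i : Fin g) {A B : (Fin g → ℝ) → ℝ}
    (hA : ContDiff ℝ (⊤ : ℕ∞) A) (hB : ContDiff ℝ (⊤ : ℕ∞) B) :
    Dd i (fun t => A t * B t) = fun x => Dd i A x * B x + A x * Dd i B x := by
  funext x
  simp only [Dd]
  rw [fderiv_fun_mul ((smooth_diff hA) x) ((smooth_diff hB) x)]
  simp [smul_eq_mul]
  ring

lemma Dd_swap {g : ℕ} (i j : Fin g) {f : (Fin g → ℝ) → ℝ}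
    (hf : ContDiff ℝ (⊤ : ℕ∞) f) :
    Dd i (Dd j f) = Dd j (Dd i f) := by
  funext x
  have hd : DifferentiableAt ℝ (fderiv ℝ f) x :=
    ((hf.fderiv_right (m := (⊤ : ℕ∞)) (by exact_mod_cast le_top)).differentiable
      (by simp)) x
  have key : ∀ (v : Fin g → ℝ) (j : Fin g),
      fderiv ℝ (Dd j f) x v = fderiv ℝ (fderiv ℝ f) x v (Pi.single j 1) := by
    intro v j
    have hDd : Dd j f = fun t => fderiv ℝ f t (Pi.single j 1) := rfl
    rw [hDd, fderiv_clm_apply hd (differentiableAt_const _)]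
    simp
  have hsymm : IsSymmSndFDerivAt ℝ f x :=
    hf.contDiffAt.isSymmSndFDerivAt (by rw [minSmoothness_of_isRCLikeNormedField]; exact WithTop.coe_le_coe.mpr le_top)
  simp only [Dd]
  rw [key, key]
  exact hsymm _ _

noncomputable def Lff {g : ℕ} (e1 : Fin g) (u1 F : (Fin g → ℝ) → ℝ) : (Fin g → ℝ) → ℝ :=
  fun t => Dd e1 (Dd e1 F) t - u1 t * F t

noncomputable def Af {g : ℕ} (e1 ek : Fin g) (u1 uk f : (Fin g → ℝ) → ℝ) : (Fin g → ℝ) → ℝ :=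
  fun t => Dd e1 (Dd e1 (Dd ek f)) t
    - (1/2 : ℝ) * (u1 t * Dd ek f t + Dd ek (fun s => u1 s * f s) t)
    - (1/4 : ℝ) * (uk t * Dd e1 f t + Dd e1 (fun s => uk s * f s) t)

@[fun_prop]
lemma Lff_contDiff {g : ℕ} (e1 : Fin g) {u1 F : (Fin g → ℝ) → ℝ}
    (h1 : ContDiff ℝ (⊤ : ℕ∞) u1) (hF : ContDiff ℝ (⊤ : ℕ∞) F) :
    ContDiff ℝ (⊤ : ℕ∞) (Lff e1 u1 F) := by
  unfold Lff; fun_prop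

@[fun_prop]
lemma Af_contDiff {g : ℕ} (e1 ek : Fin g) {u1 uk f : (Fin g → ℝ) → ℝ}
    (h1 : ContDiff ℝ (⊤ : ℕ∞) u1) (hk : ContDiff ℝ (⊤ : ℕ∞) uk)
    (hf : ContDiff ℝ (⊤ : ℕ∞) f) :
    ContDiff ℝ (⊤ : ℕ∞) (Af e1 ek u1 uk f) := by
  unfold Af; fun_prop

lemma Lff_def {g : ℕ} (e1 : Fin g) (u1 F : (Fin g → ℝ) → ℝ) :
    Lff e1 u1 F = fun t => Dd e1 (Dd e1 F) t - u1 t * F t := rfl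

lemma Af_def {g : ℕ} (e1 ek : Fin g) (u1 uk f : (Fin g → ℝ) → ℝ) :
    Af e1 ek u1 uk f = fun t => Dd e1 (Dd e1 (Dd ek f)) t
      - (1/2 : ℝ) * (u1 t * Dd ek f t + Dd ek (fun s => u1 s * f s) t)
      - (1/4 : ℝ) * (uk t * Dd e1 f t + Dd e1 (fun s => uk s * f s) t) := rfl

lemma key {g : ℕ} (e1 ek : Fin g) (u1 uk f : (Fin g → ℝ) → ℝ)
    (h1 : ContDiff ℝ (⊤ : ℕ∞) u1) (hk : ContDiff ℝ (⊤ : ℕ∞) uk)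
    (hf : ContDiff ℝ (⊤ : ℕ∞) f) (t : Fin g → ℝ) :
    Lff e1 u1 (Af e1 ek u1 uk f) t - Af e1 ek u1 uk (Lff e1 u1 f) t
      = (Dd ek u1 t - Dd e1 uk t) * Dd e1 (Dd e1 f) t
        + (Dd e1 (Dd ek u1) t - Dd e1 (Dd e1 uk) t) * Dd e1 f t
        + ((1/2 : ℝ) * Dd e1 (Dd e1 (Dd ek u1)) t - u1 t * Dd ek u1 t
            - (1/2 : ℝ) * Dd e1 u1 t * uk t
            - (1/4 : ℝ) * Dd e1 (Dd e1 (Dd e1 uk)) t) * f t := by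
  have swap : ∀ (h : (Fin g → ℝ) → ℝ), ContDiff ℝ (⊤ : ℕ∞) h →
      Dd ek (Dd e1 h) = Dd e1 (Dd ek h) := fun h hh => Dd_swap ek e1 hh
  simp (disch := fun_prop) only [Lff_def, Af_def, Dd_sub, Dd_add, Dd_mul, Dd_const, swap,
    zero_mul, mul_zero, zero_add, add_zero]
  ring

lemma pd_eq {g : ℕ} (i : ℕ) (h1 : 1 ≤ i) (h2 : i ≤ g) (f : (Fin g → ℝ) → ℝ) :
    pd i f = Dd (⟨i - 1, by omega⟩ : Fin g) f := by
  funext t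
  simp only [pd, Dd]
  rw [dif_pos ⟨h1, h2⟩]



/-- Fix `k` with `1 ≤ k ≤ g`. There exists a function `v` such that
`𝓛(𝓐_k f) − 𝓐_k(𝓛 f) = v·f` for every smooth `f` iff `∂_x u_k = ∂_k u_1`; and in that
case `𝓛(𝓐_k f) − 𝓐_k(𝓛 f) = (1/4)(u_k''' − 2u_1'u_k − 4u_1u_k')·f` for every smooth `f`. -/
theorem statement0 (g : ℕ) (hg : 1 ≤ g) (u : ℕ → (Fin g → ℝ) → ℝ)
    (hu : ∀ i, ContDiff ℝ (⊤ : ℕ∞) (u i))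
    (k : ℕ) (hk1 : 1 ≤ k) (hkg : k ≤ g) :
    ((∃ v : (Fin g → ℝ) → ℝ,
        ∀ f : (Fin g → ℝ) → ℝ, ContDiff ℝ (⊤ : ℕ∞) f → ∀ t,
          opL u (opA u k f) t - opA u k (opL u f) t = v t * f t)
      ↔ (∀ t, pd 1 (u k) t = pd k (u 1) t))
    ∧ ((∀ t, pd 1 (u k) t = pd k (u 1) t) →
        ∀ f : (Fin g → ℝ) → ℝ, ContDiff ℝ (⊤ : ℕ∞) f → ∀ t,
          opL u (opA u k f) t - opA u k (opL u f) t
            = (1/4 : ℝ) * (pd 1 (pd 1 (pd 1 (u k))) t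
                - 2 * pd 1 (u 1) t * u k t - 4 * u 1 t * pd 1 (u k) t) * f t) := by
  have hg0 : 0 < g := hg
  let e1 : Fin g := ⟨0, hg0⟩
  let ek : Fin g := ⟨k - 1, by omega⟩
  have hp1 : ∀ f : (Fin g → ℝ) → ℝ, pd 1 f = Dd e1 f := fun f => pd_eq 1 le_rfl hg f
  have hpk : ∀ f : (Fin g → ℝ) → ℝ, pd k f = Dd ek f := fun f => pd_eq k hk1 hkg f
  have hL : ∀ F, opL u F = Lff e1 (u 1) F := by
    intro F; funext t; simp only [opL, Lff, hp1]
  have hA : ∀ f, opA u k f = Af e1 ek (u 1) (u k) f := by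
    intro f; funext t; simp only [opA, Af, hp1, hpk]
  have main : (∀ t, pd 1 (u k) t = pd k (u 1) t) →
      ∀ f : (Fin g → ℝ) → ℝ, ContDiff ℝ (⊤ : ℕ∞) f → ∀ t,
        opL u (opA u k f) t - opA u k (opL u f) t
          = (1/4 : ℝ) * (pd 1 (pd 1 (pd 1 (u k))) t
              - 2 * pd 1 (u 1) t * u k t - 4 * u 1 t * pd 1 (u k) t) * f t := by
    intro hab f hf t
    have habF : Dd e1 (u k) = Dd ek (u 1) := by
      funext s
      have h := hab s
      rwa [hp1, hpk] at h
    simp only [hL, hA]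
    rw [key e1 ek (u 1) (u k) f (hu 1) (hu k) hf t]
    simp only [hp1, hpk]
    rw [← habF]
    ring
  refine ⟨⟨?_, ?_⟩, main⟩
  · rintro ⟨v, hv⟩ t0
    set E : (Fin g → ℝ) → ℝ := fun s => s e1 - t0 e1 with hEdef
    have hEsm : ContDiff ℝ (⊤ : ℕ∞) E := (contDiff_apply ℝ ℝ e1).sub contDiff_const
    have hDE : Dd e1 E = fun _ => (1 : ℝ) := by
      funext x
      show fderiv ℝ (fun s : Fin g → ℝ => s e1 - t0 e1) x (Pi.single e1 1) = 1
      rw [fderiv_fun_sub (((contDiff_apply ℝ ℝ e1 (n := (⊤ : ℕ∞))).differentiable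
          (by norm_cast)) x) (differentiableAt_const _)]
      have hpr : fderiv ℝ (fun s : Fin g → ℝ => s e1) x
          = ContinuousLinearMap.proj (R := ℝ) (φ := fun _ : Fin g => ℝ) e1 :=
        (ContinuousLinearMap.proj (R := ℝ) (φ := fun _ : Fin g => ℝ) e1).fderiv
      simp [hpr]
    set f2 : (Fin g → ℝ) → ℝ := fun s => E s * E s with hf2def
    have hf2 : ContDiff ℝ (⊤ : ℕ∞) f2 := hEsm.mul hEsm
    have hE0 : E t0 = 0 := by simp [hEdef]
    have hf20 : f2 t0 = 0 := by rw [hf2def]; simp [hE0]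
    have h1 : Dd e1 f2 = fun x => E x + E x := by
      rw [hf2def, Dd_mul e1 hEsm hEsm, hDE]
      funext x; simp
    have hDf20 : Dd e1 f2 t0 = 0 := by rw [h1]; simp [hE0]
    have h2 : Dd e1 (Dd e1 f2) t0 = 2 := by
      rw [h1, Dd_add e1 hEsm hEsm, hDE]
      norm_num
    have hval := hv f2 hf2 t0
    simp only [hL, hA] at hval
    rw [key e1 ek (u 1) (u k) f2 (hu 1) (hu k) hf2 t0] at hval
    rw [hf20, hDf20, h2] at hval
    simp only [mul_zero, add_zero, mul_one] at hval
    rw [hp1, hpk]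
    linarith
  · intro hab
    exact ⟨fun t => (1/4 : ℝ) * (pd 1 (pd 1 (pd 1 (u k))) t
        - 2 * pd 1 (u 1) t * u k t - 4 * u 1 t * pd 1 (u k) t),
      fun f hf t => main hab f hf t⟩
end

section
/- Assume: (i) ∂_k u_1 = u_k' and 4·∂_{k+1}u_1 = u_k''' − 2u_1'u_k − 4u_1u_k' for 1 ≤ k ≤ g; (ii) ∂_i u_j = ∂_j u_i for all i, j; (iii) u_k'u_i − u_i'u_k + 2∂_{i+1}u_k − 2∂_{k+1}u_i = 0 for all i, k; and that equation (4mu) holds with real constants μ_1, …, μ_{2g}. Then for every smooth f : ℝ^g → ℝ one has the operator identity 4·(∑_{i=1}^g 𝓤_i ∘ 𝓛^{g−i})((∑_{j=1}^g 𝓤_j ∘ 𝓛^{g−j}) f) = 4·𝓛^{2g+1} f + ∑_{i=1}^{2g} μ_i · 𝓛^{2g−i} f, where 𝓛^m denotes m-fold composition of 𝓛. -/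
open scoped BigOperators

/-- The generating function `𝐮(ξ) = ∑_{i=1}^g u_i ξ^i`. -/
noncomputable def bfu {g : ℕ} (u : ℕ → (Fin g → ℝ) → ℝ) (ξ : ℝ) :
    (Fin g → ℝ) → ℝ :=
  fun t => ∑ i ∈ Finset.Icc 1 g, u i t * ξ ^ i

/-- `𝐮'(ξ) = ∑_{i=1}^g u_i' ξ^i` (prime is `∂_x = ∂_1`). -/
noncomputable def bfu1 {g : ℕ} (u : ℕ → (Fin g → ℝ) → ℝ) (ξ : ℝ) :
    (Fin g → ℝ) → ℝ :=
  fun t => ∑ i ∈ Finset.Icc 1 g, pd 1 (u i) t * ξ ^ i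

/-- `𝐮''(ξ) = ∑_{i=1}^g u_i'' ξ^i`. -/
noncomputable def bfu2 {g : ℕ} (u : ℕ → (Fin g → ℝ) → ℝ) (ξ : ℝ) :
    (Fin g → ℝ) → ℝ :=
  fun t => ∑ i ∈ Finset.Icc 1 g, pd 1 (pd 1 (u i)) t * ξ ^ i

/-- `𝐮'''(ξ) = ∑_{i=1}^g u_i''' ξ^i`. -/
noncomputable def bfu3 {g : ℕ} (u : ℕ → (Fin g → ℝ) → ℝ) (ξ : ℝ) :
    (Fin g → ℝ) → ℝ :=
  fun t => ∑ i ∈ Finset.Icc 1 g, pd 1 (pd 1 (pd 1 (u i))) t * ξ ^ i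

/-- The operator `𝐔 = ∑_{i=1}^g 𝓤_i ∘ 𝓛^{g−i}` (i.e. `𝓤_1𝓛^{g−1} + … + 𝓤_g`). -/
noncomputable def ULop {g : ℕ} (u : ℕ → (Fin g → ℝ) → ℝ)
    (f : (Fin g → ℝ) → ℝ) : (Fin g → ℝ) → ℝ :=
  fun t => ∑ i ∈ Finset.Icc 1 g, opU u i ((opL u)^[g - i] f) t

section pdAPI
variable {g : ℕ}

abbrev Sm {g : ℕ} (f : (Fin g → ℝ) → ℝ) : Prop := ContDiff ℝ (⊤ : ℕ∞) f

lemma pd_out (i : ℕ) (h : ¬ (1 ≤ i ∧ i ≤ g)) (f : (Fin g → ℝ) → ℝ) :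
    pd i f = 0 := by
  funext t; simp [pd, h]

lemma pd_smooth {i : ℕ} {f : (Fin g → ℝ) → ℝ} (hf : Sm f) : Sm (pd i f) := by
  by_cases h : 1 ≤ i ∧ i ≤ g
  · have : pd i f = fun t => fderiv ℝ f t (Pi.single (⟨i - 1, by omega⟩ : Fin g) 1) := by
      funext t; simp [pd, h]
    rw [this]
    exact (hf.fderiv_right (by exact_mod_cast le_top)).clm_apply contDiff_const
  · rw [pd_out i h]; exact contDiff_const
end pdAPI

section pdAPI2
variable {g : ℕ}

lemma Sm.dAt {f : (Fin g → ℝ) → ℝ} (hf : Sm f) (t : Fin g → ℝ) :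
    DifferentiableAt ℝ f t := (hf.differentiable (by simp)).differentiableAt

lemma pd_congr {i : ℕ} {f h : (Fin g → ℝ) → ℝ} (hfh : ∀ t, f t = h t) :
    ∀ t, pd i f t = pd i h t := by
  have : f = h := funext hfh
  rw [this]; intro t; rfl

lemma pd_add {i : ℕ} {f h : (Fin g → ℝ) → ℝ} {t : Fin g → ℝ}
    (hf : DifferentiableAt ℝ f t) (hh : DifferentiableAt ℝ h t) :
    pd i (fun s => f s + h s) t = pd i f t + pd i h t := by
  by_cases hr : 1 ≤ i ∧ i ≤ g
  · simp only [pd, dif_pos hr, fderiv_fun_add hf hh]; rfl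
  · simp [pd, dif_neg hr]

lemma pd_sub {i : ℕ} {f h : (Fin g → ℝ) → ℝ} {t : Fin g → ℝ}
    (hf : DifferentiableAt ℝ f t) (hh : DifferentiableAt ℝ h t) :
    pd i (fun s => f s - h s) t = pd i f t - pd i h t := by
  by_cases hr : 1 ≤ i ∧ i ≤ g
  · simp only [pd, dif_pos hr, fderiv_fun_sub hf hh]; rfl
  · simp [pd, dif_neg hr]

lemma pd_mul {i : ℕ} {f h : (Fin g → ℝ) → ℝ} {t : Fin g → ℝ}
    (hf : DifferentiableAt ℝ f t) (hh : DifferentiableAt ℝ h t) :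
    pd i (fun s => f s * h s) t = f t * pd i h t + pd i f t * h t := by
  by_cases hr : 1 ≤ i ∧ i ≤ g
  · simp only [pd, dif_pos hr, fderiv_fun_mul hf hh]
    simp [mul_comm]
  · simp [pd, dif_neg hr]

lemma pd_const {i : ℕ} (c : ℝ) : pd (g := g) i (fun _ => c) = 0 := by
  funext t
  by_cases hr : 1 ≤ i ∧ i ≤ g
  · simp [pd, dif_pos hr]
  · simp [pd, dif_neg hr]

lemma pd_const_mul {i : ℕ} {f : (Fin g → ℝ) → ℝ} {t : Fin g → ℝ} (c : ℝ)
    (hf : DifferentiableAt ℝ f t) :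
    pd i (fun s => c * f s) t = c * pd i f t := by
  by_cases hr : 1 ≤ i ∧ i ≤ g
  · simp only [pd, dif_pos hr, fderiv_const_mul hf]; rfl
  · simp [pd, dif_neg hr]

lemma pd_neg {i : ℕ} {f : (Fin g → ℝ) → ℝ} {t : Fin g → ℝ} :
    pd i (fun s => -(f s)) t = -(pd i f t) := by
  by_cases hr : 1 ≤ i ∧ i ≤ g
  · simp only [pd, dif_pos hr, fderiv_fun_neg]; rfl
  · simp [pd, dif_neg hr]

lemma pd_zero {i : ℕ} : pd (g := g) i (0 : (Fin g → ℝ) → ℝ) = 0 := by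
  have := pd_const (g := g) (i := i) 0
  exact this

lemma pd_sum {i : ℕ} {ι : Type*} (S : Finset ι) (f : ι → (Fin g → ℝ) → ℝ) {t : Fin g → ℝ}
    (hf : ∀ j ∈ S, DifferentiableAt ℝ (f j) t) :
    pd i (fun s => ∑ j ∈ S, f j s) t = ∑ j ∈ S, pd i (f j) t := by
  by_cases hr : 1 ≤ i ∧ i ≤ g
  · simp only [pd, dif_pos hr]
    rw [fderiv_fun_sum hf]
    simp
  · simp [pd, dif_neg hr]

lemma pd_comm {i j : ℕ} {f : (Fin g → ℝ) → ℝ} (hf : Sm f) (t : Fin g → ℝ) :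
    pd i (pd j f) t = pd j (pd i f) t := by
  by_cases hi : 1 ≤ i ∧ i ≤ g
  · by_cases hj : 1 ≤ j ∧ j ≤ g
    · have hdf : ∀ y, HasFDerivAt f (fderiv ℝ f y) y := fun y => (hf.dAt y).hasFDerivAt
      have hd2 : DifferentiableAt ℝ (fderiv ℝ f) t :=
        ((hf.fderiv_right (m := 1) (by exact ENat.natCast_le_of_coe_top_le_withTop le_rfl 2)).differentiable
          one_ne_zero).differentiableAt
      have hsymm := second_derivative_symmetric hdf hd2.hasFDerivAt
      have expand : ∀ (k : ℕ) (hk : 1 ≤ k ∧ k ≤ g) (l : ℕ) (hl : 1 ≤ l ∧ l ≤ g),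
          pd k (pd l f) t
            = fderiv ℝ (fderiv ℝ f) t (Pi.single (⟨k - 1, by omega⟩ : Fin g) 1)
                (Pi.single (⟨l - 1, by omega⟩ : Fin g) 1) := by
        intro k hk l hl
        have hpl : pd l f = fun s => fderiv ℝ f s (Pi.single (⟨l - 1, by omega⟩ : Fin g) 1) := by
          funext s; simp [pd, dif_pos hl]
        rw [show pd k (pd l f) t
            = fderiv ℝ (pd l f) t (Pi.single (⟨k - 1, by omega⟩ : Fin g) 1) by
          simp [pd, dif_pos hk], hpl]
        rw [fderiv_clm_apply hd2 (differentiableAt_const _)]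
        simp
      rw [expand i hi j hj, expand j hj i hi]
      all_goals exact hsymm _ _
    · rw [pd_out j hj f, pd_zero, pd_out j hj (pd i f)]
      all_goals simp
  · rw [pd_out i hi f, pd_out i hi (pd j f), pd_zero]
    all_goals simp
end pdAPI2

section layer2
variable {g : ℕ}

lemma Sm.d {f : (Fin g → ℝ) → ℝ} (hf : Sm f) : Differentiable ℝ f :=
  hf.differentiable (by simp)

lemma pd_constf {i : ℕ} (c : ℝ) : pd (g := g) i (fun _ => c) = fun _ => (0:ℝ) := by
  rw [pd_const]; rfl

lemma pd_sub' {i : ℕ} {f h : (Fin g → ℝ) → ℝ}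
    (hf : Differentiable ℝ f) (hh : Differentiable ℝ h) :
    pd i (fun s => f s - h s) = fun t => pd i f t - pd i h t :=
  funext fun t => pd_sub (hf t) (hh t)

lemma pd_add' {i : ℕ} {f h : (Fin g → ℝ) → ℝ}
    (hf : Differentiable ℝ f) (hh : Differentiable ℝ h) :
    pd i (fun s => f s + h s) = fun t => pd i f t + pd i h t :=
  funext fun t => pd_add (hf t) (hh t)

lemma pd_mul' {i : ℕ} {f h : (Fin g → ℝ) → ℝ}
    (hf : Differentiable ℝ f) (hh : Differentiable ℝ h) :
    pd i (fun s => f s * h s) = fun t => f t * pd i h t + pd i f t * h t :=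
  funext fun t => pd_mul (hf t) (hh t)

lemma pd_neg' {i : ℕ} {f : (Fin g → ℝ) → ℝ} :
    pd i (fun s => -(f s)) = fun t => -(pd i f t) :=
  funext fun t => pd_neg

lemma pd_sum' {i : ℕ} {ι : Type*} (S : Finset ι) (f : ι → (Fin g → ℝ) → ℝ)
    (hf : ∀ j ∈ S, Differentiable ℝ (f j)) :
    pd i (fun s => ∑ j ∈ S, f j s) = fun t => ∑ j ∈ S, pd i (f j) t :=
  funext fun t => pd_sum S f (fun j hj => (hf j hj) t)

lemma pd_comm' {i j : ℕ} {f : (Fin g → ℝ) → ℝ} (hf : Sm f) :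
    pd i (pd j f) = pd j (pd i f) :=
  funext fun t => pd_comm hf t

lemma opL_def (u : ℕ → (Fin g → ℝ) → ℝ) (h : (Fin g → ℝ) → ℝ) :
    opL u h = fun t => pd 1 (pd 1 h) t - u 1 t * h t := rfl

lemma opL_smooth {u : ℕ → (Fin g → ℝ) → ℝ} (hu : ∀ i, Sm (u i))
    {f : (Fin g → ℝ) → ℝ} (hf : Sm f) : Sm (opL u f) := by
  rw [opL_def]
  exact (pd_smooth (pd_smooth hf)).sub ((hu 1).mul hf)

lemma iterL_smooth {u : ℕ → (Fin g → ℝ) → ℝ} (hu : ∀ i, Sm (u i))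
    {f : (Fin g → ℝ) → ℝ} (hf : Sm f) (n : ℕ) : Sm ((opL u)^[n] f) := by
  induction n with
  | zero => exact hf
  | succ n ih => rw [Function.iterate_succ_apply']; exact opL_smooth hu ih

/-- coefficients of `F(ξ) = 2 - 𝐮(ξ)`. -/
noncomputable def bb {g : ℕ} (u : ℕ → (Fin g → ℝ) → ℝ) (i : ℕ) : (Fin g → ℝ) → ℝ :=
  if i = 0 then (fun _ => 2) else if i ≤ g then (fun t => -(u i t)) else (fun _ => 0)

lemma bb_zero (u : ℕ → (Fin g → ℝ) → ℝ) : bb u 0 = fun _ => (2:ℝ) := by simp [bb]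

lemma bb_in (u : ℕ → (Fin g → ℝ) → ℝ) {i : ℕ} (h1 : 1 ≤ i) (h2 : i ≤ g) :
    bb u i = fun t => -(u i t) := by
  have : ¬ (i = 0) := by omega
  simp [bb, this, h2]

lemma bb_out (u : ℕ → (Fin g → ℝ) → ℝ) {i : ℕ} (h : g < i) :
    bb u i = fun _ => (0:ℝ) := by
  have h0 : ¬ (i = 0) := by omega
  have h1 : ¬ (i ≤ g) := by omega
  simp [bb, h0, h1]

lemma bb_smooth {u : ℕ → (Fin g → ℝ) → ℝ} (hu : ∀ i, Sm (u i)) (i : ℕ) :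
    Sm (bb u i) := by
  rcases Nat.eq_zero_or_pos i with h | h
  · subst h; rw [bb_zero]; exact contDiff_const
  · rcases le_or_gt i g with h2 | h2
    · rw [bb_in u h h2]; exact (hu i).neg
    · rw [bb_out u h2]; exact contDiff_const

/-- The elementary first-order blocks `S_b h = b·h' - (1/2)b'·h`. -/
noncomputable def SSf {g : ℕ} (b h : (Fin g → ℝ) → ℝ) : (Fin g → ℝ) → ℝ :=
  fun s => b s * pd 1 h s - 2⁻¹ * pd 1 b s * h s

lemma SSf_def (b h : (Fin g → ℝ) → ℝ) :
    SSf b h = fun s => b s * pd 1 h s - 2⁻¹ * pd 1 b s * h s := rfl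

lemma SSf_smooth {b h : (Fin g → ℝ) → ℝ} (hb : Sm b) (hh : Sm h) : Sm (SSf b h) := by
  rw [SSf_def]
  exact (hb.mul (pd_smooth hh)).sub ((contDiff_const.mul (pd_smooth hb)).mul hh)

/-- The operator `P = ∂ₓ∘𝓛^g + ∑ (−(1/2)uₖ∂ₓ + (1/4)uₖ')∘𝓛^{g-k}`, normal form of `𝐔`. -/
noncomputable def Pop {g : ℕ} (u : ℕ → (Fin g → ℝ) → ℝ) (f : (Fin g → ℝ) → ℝ) :
    (Fin g → ℝ) → ℝ :=
  fun t => 2⁻¹ * ∑ i ∈ Finset.range (g+1), SSf (bb u i) ((opL u)^[g - i] f) t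

lemma Pop_def (u : ℕ → (Fin g → ℝ) → ℝ) (f : (Fin g → ℝ) → ℝ) :
    Pop u f = fun t => 2⁻¹ * ∑ i ∈ Finset.range (g+1), SSf (bb u i) ((opL u)^[g - i] f) t := rfl

lemma Pop_smooth {u : ℕ → (Fin g → ℝ) → ℝ} (hu : ∀ i, Sm (u i))
    {f : (Fin g → ℝ) → ℝ} (hf : Sm f) : Sm (Pop u f) := by
  rw [Pop_def]
  exact contDiff_const.mul (ContDiff.sum (fun i _ =>
    SSf_smooth (bb_smooth hu i) (iterL_smooth hu hf _)))

end layer2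

section layer3
variable {g : ℕ}

lemma opU_eq {u : ℕ → (Fin g → ℝ) → ℝ} (hu : ∀ i, Sm (u i))
    (hc1 : ∀ k, 1 ≤ k → k ≤ g → ∀ t, pd k (u 1) t = pd 1 (u k) t)
    {k : ℕ} (hk1 : 1 ≤ k) (hk2 : k ≤ g)
    {f : (Fin g → ℝ) → ℝ} (hf : Sm f) (t : Fin g → ℝ) :
    opU u k f t = pd k (opL u f) t - pd (k+1) f t
      + (4⁻¹ * pd 1 (u k) t * f t - 2⁻¹ * u k t * pd 1 f t) := by
  have hf1 : Sm (pd 1 f) := pd_smooth hf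
  have hf2 : Sm (pd 1 (pd 1 f)) := pd_smooth hf1
  have d1 := (hu 1).d
  have dk := (hu k).d
  have df := hf.d
  have df1 := hf1.d
  have df2 := hf2.d
  simp (disch := fun_prop) only [opU, opA, opL_def, pd_sub', pd_mul']
  rw [show pd 1 (pd k f) = pd k (pd 1 f) from pd_comm' hf]
  rw [show pd 1 (pd k (pd 1 f)) = pd k (pd 1 (pd 1 f)) from pd_comm' hf1]
  rw [hc1 k hk1 hk2 t]
  ring

lemma telescope_sum (a : ℕ → ℝ) (n : ℕ) :
    ∑ k ∈ Finset.Icc 1 n, (a k - a (k+1)) = a 1 - a (n+1) := by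
  induction n with
  | zero => simp
  | succ n ih =>
      rw [Finset.sum_Icc_succ_top (by omega), ih]
      ring

lemma ULop_eq_Pop {u : ℕ → (Fin g → ℝ) → ℝ} (hu : ∀ i, Sm (u i))
    (hc1 : ∀ k, 1 ≤ k → k ≤ g → ∀ t, pd k (u 1) t = pd 1 (u k) t)
    {f : (Fin g → ℝ) → ℝ} (hf : Sm f) (t : Fin g → ℝ) :
    ULop u f t = Pop u f t := by
  classical
  set L := opL u with hL
  -- the telescoping family
  set a : ℕ → ℝ := fun k => pd k (L^[g+1-k] f) t with ha
  have step : ∀ k ∈ Finset.Icc 1 g, opU u k (L^[g-k] f) t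
      = (a k - a (k+1))
        + (4⁻¹ * pd 1 (u k) t * (L^[g-k] f) t - 2⁻¹ * u k t * pd 1 (L^[g-k] f) t) := by
    intro k hk
    rw [Finset.mem_Icc] at hk
    have hit : Sm (L^[g-k] f) := iterL_smooth hu hf _
    rw [opU_eq hu hc1 hk.1 hk.2 hit t]
    have e1 : opL u (L^[g-k] f) = L^[g+1-k] f := by
      rw [hL, show g+1-k = (g-k)+1 by omega, Function.iterate_succ_apply']
    have e2 : (g:ℕ)+1-(k+1) = g-k := by omega
    rw [e1, ha]
    simp only [e2]
    all_goals ring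
  rw [ULop, Finset.sum_congr rfl step, Finset.sum_add_distrib, telescope_sum]
  have hag : a (g+1) = 0 := by
    show pd (g+1) (L^[g+1-(g+1)] f) t = 0
    rw [pd_out (g := g) (g+1) (by omega) (L^[g+1-(g+1)] f)]
    rfl
  have ha1 : a 1 = pd 1 (L^[g] f) t := by
    show pd 1 (L^[g+1-1] f) t = _
    norm_num
  rw [hag, ha1, sub_zero]
  -- now the Pop side
  show _ = 2⁻¹ * ∑ i ∈ Finset.range (g+1), SSf (bb u i) (L^[g - i] f) t
  rw [Finset.sum_range_succ']
  have hterm0 : SSf (bb u 0) (L^[g - 0] f) t = 2 * pd 1 (L^[g] f) t := by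
    rw [SSf_def, bb_zero, pd_constf]
    norm_num
  rw [hterm0]
  have hterm : ∀ i ∈ Finset.range g, SSf (bb u (i+1)) (L^[g - (i+1)] f) t
      = -(u (i+1) t) * pd 1 (L^[g-(i+1)] f) t + 2⁻¹ * pd 1 (u (i+1)) t * (L^[g-(i+1)] f) t := by
    intro i hi
    rw [Finset.mem_range] at hi
    rw [SSf_def, bb_in u (by omega) (by omega), pd_neg']
    ring
  have hIcc : ∑ k ∈ Finset.Icc 1 g,
      (4⁻¹ * pd 1 (u k) t * (L^[g-k] f) t - 2⁻¹ * u k t * pd 1 (L^[g-k] f) t)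
      = ∑ i ∈ Finset.range g,
      (4⁻¹ * pd 1 (u (i+1)) t * (L^[g-(i+1)] f) t - 2⁻¹ * u (i+1) t * pd 1 (L^[g-(i+1)] f) t) := by
    rw [← Finset.Ico_add_one_right_eq_Icc, Finset.sum_Ico_eq_sum_range]
    simp only [Nat.succ_sub_one, Nat.add_sub_cancel, Nat.add_comm 1]
  rw [hIcc, Finset.sum_congr rfl hterm, mul_add, Finset.mul_sum]
  rw [Finset.sum_congr rfl (fun i _ => (by ring :
    2⁻¹ * ((-(u (i+1) t)) * pd 1 (L^[g-(i+1)] f) t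
        + 2⁻¹ * pd 1 (u (i+1)) t * (L^[g-(i+1)] f) t)
    = 4⁻¹ * pd 1 (u (i+1)) t * (L^[g-(i+1)] f) t
        - 2⁻¹ * u (i+1) t * pd 1 (L^[g-(i+1)] f) t))]
  ring

end layer3

section layer4
variable {g : ℕ}

lemma pd_const_mul' {i : ℕ} {f : (Fin g → ℝ) → ℝ} (c : ℝ) (hf : Differentiable ℝ f) :
    pd i (fun s => c * f s) = fun t => c * pd i f t :=
  funext fun t => pd_const_mul c (hf t)

lemma comm_term {u : ℕ → (Fin g → ℝ) → ℝ} (hu1 : Sm (u 1)) {b h : (Fin g → ℝ) → ℝ}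
    (hb : Sm b) (hh : Sm h) (t : Fin g → ℝ) :
    opL u (SSf b h) t
      = SSf b (opL u h) t + 2 * pd 1 b t * opL u h t
        + (2 * u 1 t * pd 1 b t + pd 1 (u 1) t * b t
            - 2⁻¹ * pd 1 (pd 1 (pd 1 b)) t) * h t := by
  have hb1 : Sm (pd 1 b) := pd_smooth hb
  have hb2 : Sm (pd 1 (pd 1 b)) := pd_smooth hb1
  have hh1 : Sm (pd 1 h) := pd_smooth hh
  have hh2 : Sm (pd 1 (pd 1 h)) := pd_smooth hh1
  have db := hb.d; have db1 := hb1.d; have db2 := hb2.d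
  have dh := hh.d; have dh1 := hh1.d; have dh2 := hh2.d
  have du1 := hu1.d
  simp (disch := fun_prop) only [SSf_def, opL_def, pd_sub', pd_add', pd_mul', pd_constf]
  ring

lemma opL_const_mul_sum {u : ℕ → (Fin g → ℝ) → ℝ} {ι : Type*} (S : Finset ι)
    (hfam : ι → (Fin g → ℝ) → ℝ) (hsm : ∀ i ∈ S, Sm (hfam i)) (c : ℝ) (t : Fin g → ℝ) :
    opL u (fun s => c * ∑ i ∈ S, hfam i s) t = c * ∑ i ∈ S, opL u (hfam i) t := by
  have d1 : ∀ i ∈ S, Differentiable ℝ (hfam i) := fun i hi => (hsm i hi).d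
  have d2 : ∀ i ∈ S, Differentiable ℝ (pd 1 (hfam i)) := fun i hi => (pd_smooth (hsm i hi)).d
  have e1 : pd 1 (fun s => c * ∑ i ∈ S, hfam i s)
      = fun t => c * ∑ i ∈ S, pd 1 (hfam i) t := by
    rw [pd_const_mul' c (Differentiable.fun_sum (fun i hi => d1 i hi)), pd_sum' S hfam d1]
  have e2 : pd 1 (fun t => c * ∑ i ∈ S, pd 1 (hfam i) t)
      = fun t => c * ∑ i ∈ S, pd 1 (pd 1 (hfam i)) t := by
    rw [pd_const_mul' c (Differentiable.fun_sum (fun i hi => d2 i hi)), pd_sum' S _ d2]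
  show pd 1 (pd 1 fun s => c * ∑ i ∈ S, hfam i s) t
      - u 1 t * (c * ∑ i ∈ S, hfam i t) = _
  rw [e1, e2]
  simp only [opL_def]
  simp only [Finset.mul_sum, ← Finset.sum_sub_distrib]
  apply Finset.sum_congr rfl
  intro i _
  ring

lemma dcoef_mid {u : ℕ → (Fin g → ℝ) → ℝ}
    (hc1 : ∀ k, 1 ≤ k → k ≤ g → ∀ t, pd k (u 1) t = pd 1 (u k) t)
    (hc2 : ∀ k, 1 ≤ k → k ≤ g → ∀ t,
      4 * pd (k+1) (u 1) t
        = pd 1 (pd 1 (pd 1 (u k))) t - 2 * pd 1 (u 1) t * u k t - 4 * u 1 t * pd 1 (u k) t)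
    {i : ℕ} (hig : i < g) (t : Fin g → ℝ) :
    2 * pd 1 (bb u (i+1)) t + (2 * u 1 t * pd 1 (bb u i) t + pd 1 (u 1) t * bb u i t
      - 2⁻¹ * pd 1 (pd 1 (pd 1 (bb u i))) t) = 0 := by
  rcases Nat.eq_zero_or_pos i with h0 | h1
  · subst h0
    rw [bb_zero, bb_in u (by omega) (by omega), pd_constf, pd_constf, pd_constf, pd_neg']
    ring
  · rw [bb_in u h1 (by omega), bb_in u (by omega) (by omega)]
    simp only [pd_neg']
    have h2 := hc2 i h1 (by omega) t
    have h1' := hc1 (i+1) (by omega) (by omega) t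
    linear_combination (-(2:ℝ)⁻¹) * h2 + 2 * h1'

lemma dcoef_top {u : ℕ → (Fin g → ℝ) → ℝ} (hg : 1 ≤ g)
    (hc2 : ∀ k, 1 ≤ k → k ≤ g → ∀ t,
      4 * pd (k+1) (u 1) t
        = pd 1 (pd 1 (pd 1 (u k))) t - 2 * pd 1 (u 1) t * u k t - 4 * u 1 t * pd 1 (u k) t)
    (t : Fin g → ℝ) :
    2 * u 1 t * pd 1 (bb u g) t + pd 1 (u 1) t * bb u g t
      - 2⁻¹ * pd 1 (pd 1 (pd 1 (bb u g))) t = 0 := by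
  rw [bb_in u hg le_rfl]
  simp only [pd_neg']
  have h2 := hc2 g hg le_rfl t
  have hz : pd (g+1) (u 1) t = 0 := by
    rw [pd_out (g := g) (g+1) (by omega) (u 1)]; rfl
  linear_combination (-(2:ℝ)⁻¹) * h2 + 2 * hz

lemma opL_Pop_comm {u : ℕ → (Fin g → ℝ) → ℝ} (hu : ∀ i, Sm (u i)) (hg : 1 ≤ g)
    (hc1 : ∀ k, 1 ≤ k → k ≤ g → ∀ t, pd k (u 1) t = pd 1 (u k) t)
    (hc2 : ∀ k, 1 ≤ k → k ≤ g → ∀ t,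
      4 * pd (k+1) (u 1) t
        = pd 1 (pd 1 (pd 1 (u k))) t - 2 * pd 1 (u 1) t * u k t - 4 * u 1 t * pd 1 (u k) t)
    {f : (Fin g → ℝ) → ℝ} (hf : Sm f) :
    opL u (Pop u f) = Pop u (opL u f) := by
  funext t
  set L := opL u with hL
  have hsm : ∀ i ∈ Finset.range (g+1), Sm (SSf (bb u i) (L^[g-i] f)) :=
    fun i _ => SSf_smooth (bb_smooth hu i) (iterL_smooth hu hf _)
  have lhs1 : opL u (Pop u f) t
      = 2⁻¹ * ∑ i ∈ Finset.range (g+1), opL u (SSf (bb u i) (L^[g-i] f)) t := by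
    rw [show Pop u f = fun s => 2⁻¹ * ∑ i ∈ Finset.range (g+1),
        SSf (bb u i) (L^[g-i] f) s from rfl]
    exact opL_const_mul_sum _ _ hsm 2⁻¹ t
  have rhs1 : Pop u (opL u f) t
      = 2⁻¹ * ∑ i ∈ Finset.range (g+1), SSf (bb u i) (opL u (L^[g-i] f)) t := by
    rw [Pop_def]
    apply congrArg
    apply Finset.sum_congr rfl
    intro i _
    rw [show L^[g-i] (opL u f) = opL u (L^[g-i] f) by
      rw [hL, ← Function.iterate_succ_apply (opL u) (g-i) f,
        Function.iterate_succ_apply' (opL u) (g-i) f]]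
  rw [hL, lhs1, rhs1]
  have expand : ∀ i ∈ Finset.range (g+1), opL u (SSf (bb u i) (L^[g-i] f)) t
      = SSf (bb u i) (opL u (L^[g-i] f)) t
        + (2 * pd 1 (bb u i) t * (L^[g-i+1] f) t
          + (2 * u 1 t * pd 1 (bb u i) t + pd 1 (u 1) t * bb u i t
            - 2⁻¹ * pd 1 (pd 1 (pd 1 (bb u i))) t) * (L^[g-i] f) t) := by
    intro i _
    rw [comm_term (hu 1) (bb_smooth hu i) (iterL_smooth hu hf _) t]
    rw [show opL u (L^[g-i] f) = L^[g-i+1] f by rw [hL, Function.iterate_succ_apply']]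
    ring
  rw [Finset.sum_congr rfl expand, Finset.sum_add_distrib, mul_add]
  have hzero : ∑ i ∈ Finset.range (g+1),
      (2 * pd 1 (bb u i) t * (L^[g-i+1] f) t
        + (2 * u 1 t * pd 1 (bb u i) t + pd 1 (u 1) t * bb u i t
          - 2⁻¹ * pd 1 (pd 1 (pd 1 (bb u i)))  t) * (L^[g-i] f) t) = 0 := by
    rw [Finset.sum_add_distrib, Finset.sum_range_succ', Finset.sum_range_succ]
    have hx0 : 2 * pd 1 (bb u 0) t * (L^[g-0+1] f) t = 0 := by
      rw [bb_zero, pd_constf]; ring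
    have hyg : (2 * u 1 t * pd 1 (bb u g) t + pd 1 (u 1) t * bb u g t
        - 2⁻¹ * pd 1 (pd 1 (pd 1 (bb u g))) t) * (L^[g-g] f) t = 0 := by
      rw [show (2 * u 1 t * pd 1 (bb u g) t + pd 1 (u 1) t * bb u g t
        - 2⁻¹ * pd 1 (pd 1 (pd 1 (bb u g))) t) = 0 from dcoef_top hg hc2 t]
      ring
    rw [hx0, hyg, add_zero, add_zero, ← Finset.sum_add_distrib]
    apply Finset.sum_eq_zero
    intro i hi
    rw [Finset.mem_range] at hi
    rw [show g - (i+1) + 1 = g - i from by omega]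
    have hmid := dcoef_mid hc1 hc2 hi t
    linear_combination ((L^[g-i] f) t) * hmid
  rw [hzero]
  ring

lemma iter_Pop_comm {u : ℕ → (Fin g → ℝ) → ℝ} (hu : ∀ i, Sm (u i)) (hg : 1 ≤ g)
    (hc1 : ∀ k, 1 ≤ k → k ≤ g → ∀ t, pd k (u 1) t = pd 1 (u k) t)
    (hc2 : ∀ k, 1 ≤ k → k ≤ g → ∀ t,
      4 * pd (k+1) (u 1) t
        = pd 1 (pd 1 (pd 1 (u k))) t - 2 * pd 1 (u 1) t * u k t - 4 * u 1 t * pd 1 (u k) t)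
    {f : (Fin g → ℝ) → ℝ} (hf : Sm f) (n : ℕ) :
    (opL u)^[n] (Pop u f) = Pop u ((opL u)^[n] f) := by
  induction n with
  | zero => rfl
  | succ n ih =>
      rw [Function.iterate_succ_apply', ih,
        opL_Pop_comm hu hg hc1 hc2 (iterL_smooth hu hf n),
        ← Function.iterate_succ_apply' (opL u) n f]

end layer4

section layer5
variable {g : ℕ}

lemma bval_out (u : ℕ → (Fin g → ℝ) → ℝ) {i : ℕ} (h : g < i) (t : Fin g → ℝ) :
    bb u i t = 0 := by rw [bb_out u h]

lemma bval1_out (u : ℕ → (Fin g → ℝ) → ℝ) {i : ℕ} (h : g < i) (t : Fin g → ℝ) :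
    pd 1 (bb u i) t = 0 := by rw [bb_out u h, pd_constf]

lemma bval2_out (u : ℕ → (Fin g → ℝ) → ℝ) {i : ℕ} (h : g < i) (t : Fin g → ℝ) :
    pd 1 (pd 1 (bb u i)) t = 0 := by rw [bb_out u h, pd_constf, pd_constf]

lemma anti_swap (n : ℕ) (f : ℕ → ℕ → ℝ) :
    ∑ p ∈ Finset.HasAntidiagonal.antidiagonal n, f p.1 p.2 = ∑ p ∈ Finset.HasAntidiagonal.antidiagonal n, f p.2 p.1 := by
  conv_rhs => rw [← Finset.HasAntidiagonal.map_swap_antidiagonal]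
  rw [Finset.sum_map]
  apply Finset.sum_congr rfl
  intro p _
  simp

lemma regroup (M : ℕ) (φ : ℕ → ℕ → ℝ) (hφ : ∀ i j, (M < i ∨ M < j) → φ i j = 0) :
    ∑ i ∈ Finset.range (M+1), ∑ j ∈ Finset.range (M+1), φ i j
      = ∑ n ∈ Finset.range (2*M+2), ∑ p ∈ Finset.HasAntidiagonal.antidiagonal n, φ p.1 p.2 := by
  classical
  have h1 : ∑ i ∈ Finset.range (M+1), ∑ j ∈ Finset.range (M+1), φ i j
      = ∑ p ∈ (Finset.range (M+1)) ×ˢ (Finset.range (M+1)), φ p.1 p.2 :=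
    (Finset.sum_product (s := Finset.range (M+1)) (t := Finset.range (M+1))
      (f := fun p => φ p.1 p.2)).symm
  have h2 : ∑ p ∈ (Finset.range (M+1)) ×ˢ (Finset.range (M+1)), φ p.1 p.2
      = ∑ p ∈ (Finset.range (2*M+2)) ×ˢ (Finset.range (2*M+2)), φ p.1 p.2 := by
    apply Finset.sum_subset
    · intro p hp
      simp only [Finset.mem_product, Finset.mem_range] at hp ⊢
      omega
    · intro p hp hnp
      simp only [Finset.mem_product, Finset.mem_range] at hp hnp
      apply hφ
      omega
  have hdisj : (↑(Finset.range (2*M+2)) : Set ℕ).PairwiseDisjoint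
      (fun n => Finset.HasAntidiagonal.antidiagonal n) := by
    intro m _ n _ hmn
    simp only [Function.onFun]
    rw [Finset.disjoint_left]
    intro p hpm hpn
    rw [Finset.HasAntidiagonal.mem_antidiagonal] at hpm hpn
    omega
  have h3 : ∑ p ∈ (Finset.range (2*M+2)).biUnion (fun n => Finset.HasAntidiagonal.antidiagonal n), φ p.1 p.2
      = ∑ n ∈ Finset.range (2*M+2), ∑ p ∈ Finset.HasAntidiagonal.antidiagonal n, φ p.1 p.2 :=
    Finset.sum_biUnion hdisj
  have h4 : ∑ p ∈ (Finset.range (2*M+2)).biUnion (fun n => Finset.HasAntidiagonal.antidiagonal n), φ p.1 p.2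
      = ∑ p ∈ (Finset.range (2*M+2)) ×ˢ (Finset.range (2*M+2)), φ p.1 p.2 := by
    apply Finset.sum_subset
    · intro p hp
      simp only [Finset.mem_biUnion, Finset.mem_range, Finset.HasAntidiagonal.mem_antidiagonal] at hp
      obtain ⟨n, hn, hpn⟩ := hp
      simp only [Finset.mem_product, Finset.mem_range]
      omega
    · intro p hp hnp
      simp only [Finset.mem_product, Finset.mem_range] at hp
      simp only [Finset.mem_biUnion, Finset.mem_range, Finset.HasAntidiagonal.mem_antidiagonal] at hnp
      apply hφ
      by_contra hcon
      push_neg at hcon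
      exact hnp ⟨p.1 + p.2, by omega, rfl⟩
  rw [h1, h2, ← h4, h3]

lemma antisym_vanish (N : ℕ) (A B : ℕ → ℝ) (ψ : ℕ → ℝ) :
    ∑ i ∈ Finset.range N, ∑ j ∈ Finset.range N,
        2⁻¹ * (A i * B j - B i * A j) * ψ (i+j) = 0 := by
  have hS : ∑ i ∈ Finset.range N, ∑ j ∈ Finset.range N,
        2⁻¹ * (A i * B j - B i * A j) * ψ (i+j)
      = - ∑ i ∈ Finset.range N, ∑ j ∈ Finset.range N,
        2⁻¹ * (A i * B j - B i * A j) * ψ (i+j) := by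
    nth_rewrite 1 [Finset.sum_comm]
    rw [← Finset.sum_neg_distrib]
    apply Finset.sum_congr rfl
    intro i _
    rw [← Finset.sum_neg_distrib]
    apply Finset.sum_congr rfl
    intro j _
    rw [Nat.add_comm j i]
    ring
  linarith

lemma SS_expand {u : ℕ → (Fin g → ℝ) → ℝ} (hu1 : Sm (u 1)) {b c h : (Fin g → ℝ) → ℝ}
    (hb : Sm b) (hc : Sm c) (hh : Sm h) (t : Fin g → ℝ) :
    b t * pd 1 (SSf c h) t - 2⁻¹ * pd 1 b t * SSf c h t
      = b t * c t * opL u h t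
        + 2⁻¹ * (b t * pd 1 c t - pd 1 b t * c t) * pd 1 h t
        + (u 1 t * (b t * c t) - 2⁻¹ * (b t * pd 1 (pd 1 c) t)
            + 4⁻¹ * (pd 1 b t * pd 1 c t)) * h t := by
  have hc1 : Sm (pd 1 c) := pd_smooth hc
  have hc2 : Sm (pd 1 (pd 1 c)) := pd_smooth hc1
  have hh1 : Sm (pd 1 h) := pd_smooth hh
  have hh2 : Sm (pd 1 (pd 1 h)) := pd_smooth hh1
  have db := hb.d; have dc := hc.d; have dc1 := hc1.d; have dc2 := hc2.d
  have dh := hh.d; have dh1 := hh1.d; have dh2 := hh2.d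
  simp (disch := fun_prop) only [SSf_def, opL_def, pd_sub', pd_add', pd_mul', pd_constf]
  ring

lemma PopPop {u : ℕ → (Fin g → ℝ) → ℝ} (hu : ∀ i, Sm (u i)) (hg : 1 ≤ g)
    (hc1 : ∀ k, 1 ≤ k → k ≤ g → ∀ t, pd k (u 1) t = pd 1 (u k) t)
    (hc2 : ∀ k, 1 ≤ k → k ≤ g → ∀ t,
      4 * pd (k+1) (u 1) t
        = pd 1 (pd 1 (pd 1 (u k))) t - 2 * pd 1 (u 1) t * u k t - 4 * u 1 t * pd 1 (u k) t)
    {f : (Fin g → ℝ) → ℝ} (hf : Sm f) (t : Fin g → ℝ) :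
    4 * Pop u (Pop u f) t
      = ∑ n ∈ Finset.range (2*g+2),
          ((∑ p ∈ Finset.HasAntidiagonal.antidiagonal n, bb u p.1 t * bb u p.2 t)
              * ((opL u)^[2*g-n+1] f) t
           + (∑ p ∈ Finset.HasAntidiagonal.antidiagonal n,
                (u 1 t * (bb u p.1 t * bb u p.2 t)
                 - 2⁻¹ * (bb u p.1 t * pd 1 (pd 1 (bb u p.2)) t)
                 + 4⁻¹ * (pd 1 (bb u p.1) t * pd 1 (bb u p.2) t)))
              * ((opL u)^[2*g-n] f) t) := by
  set L := opL u with hL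
  -- Step 0: commute iterates through Pop
  have e0 : Pop u (Pop u f) t
      = 2⁻¹ * ∑ i ∈ Finset.range (g+1), SSf (bb u i) (Pop u (L^[g-i] f)) t := by
    rw [Pop_def]
    exact congrArg _ (Finset.sum_congr rfl fun i _ => by
      rw [iter_Pop_comm hu hg hc1 hc2 hf (g-i)])
  -- pd 1 of Pop as a sum
  have pd1Pop : ∀ h : (Fin g → ℝ) → ℝ, Sm h →
      pd 1 (Pop u h) = fun s => 2⁻¹ * ∑ j ∈ Finset.range (g+1),
        pd 1 (SSf (bb u j) (L^[g-j] h)) s := by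
    intro h hh
    have dS : ∀ j ∈ Finset.range (g+1), Differentiable ℝ (SSf (bb u j) (L^[g-j] h)) :=
      fun j _ => (SSf_smooth (bb_smooth hu j) (iterL_smooth hu hh _)).d
    rw [show Pop u h = fun s => 2⁻¹ * ∑ j ∈ Finset.range (g+1),
        SSf (bb u j) (L^[g-j] h) s from rfl]
    rw [pd_const_mul' 2⁻¹ (Differentiable.fun_sum dS), pd_sum' _ _ dS]
  -- expand to a double sum
  have e1 : ∀ i ∈ Finset.range (g+1), SSf (bb u i) (Pop u (L^[g-i] f)) t
      = 2⁻¹ * ∑ j ∈ Finset.range (g+1),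
          (bb u i t * pd 1 (SSf (bb u j) (L^[g-j] (L^[g-i] f))) t
           - 2⁻¹ * pd 1 (bb u i) t * SSf (bb u j) (L^[g-j] (L^[g-i] f)) t) := by
    intro i _
    have hhi : Sm (L^[g-i] f) := iterL_smooth hu hf _
    rw [SSf_def]
    rw [pd1Pop _ hhi]
    rw [show Pop u (L^[g-i] f) = fun s => 2⁻¹ * ∑ j ∈ Finset.range (g+1),
        SSf (bb u j) (L^[g-j] (L^[g-i] f)) s from rfl]
    beta_reduce
    simp only [Finset.mul_sum]
    rw [← Finset.sum_sub_distrib]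
    apply Finset.sum_congr rfl
    intro j _
    ring
  rw [e0, Finset.sum_congr rfl e1]
  -- now a clean double sum; expand each (i,j) term
  have e2 : ∀ i ∈ Finset.range (g+1), ∀ j ∈ Finset.range (g+1),
      (bb u i t * pd 1 (SSf (bb u j) (L^[g-j] (L^[g-i] f))) t
        - 2⁻¹ * pd 1 (bb u i) t * SSf (bb u j) (L^[g-j] (L^[g-i] f)) t)
      = bb u i t * bb u j t * (L^[2*g-(i+j)+1] f) t
        + 2⁻¹ * (bb u i t * pd 1 (bb u j) t - pd 1 (bb u i) t * bb u j t)
            * pd 1 (L^[2*g-(i+j)] f) t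
        + (u 1 t * (bb u i t * bb u j t) - 2⁻¹ * (bb u i t * pd 1 (pd 1 (bb u j)) t)
            + 4⁻¹ * (pd 1 (bb u i) t * pd 1 (bb u j) t)) * (L^[2*g-(i+j)] f) t := by
    intro i hi j hj
    rw [Finset.mem_range] at hi hj
    have hiter : L^[g-j] (L^[g-i] f) = L^[2*g-(i+j)] f := by
      rw [← Function.iterate_add_apply, show (g-j) + (g-i) = 2*g-(i+j) from by omega]
    rw [hiter]
    rw [SS_expand (hu 1) (bb_smooth hu i) (bb_smooth hu j) (iterL_smooth hu hf _) t]
    rw [show opL u (L^[2*g-(i+j)] f) = L^[2*g-(i+j)+1] f from by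
      rw [hL, Function.iterate_succ_apply']]
  -- apply e2 inside the double sum
  have e3 : ∑ i ∈ Finset.range (g+1), 2⁻¹ * ∑ j ∈ Finset.range (g+1),
      (bb u i t * pd 1 (SSf (bb u j) (L^[g-j] (L^[g-i] f))) t
        - 2⁻¹ * pd 1 (bb u i) t * SSf (bb u j) (L^[g-j] (L^[g-i] f)) t)
      = 2⁻¹ * ∑ i ∈ Finset.range (g+1), ∑ j ∈ Finset.range (g+1),
        (bb u i t * bb u j t * (L^[2*g-(i+j)+1] f) t
        + 2⁻¹ * (bb u i t * pd 1 (bb u j) t - pd 1 (bb u i) t * bb u j t)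
            * pd 1 (L^[2*g-(i+j)] f) t
        + (u 1 t * (bb u i t * bb u j t) - 2⁻¹ * (bb u i t * pd 1 (pd 1 (bb u j)) t)
            + 4⁻¹ * (pd 1 (bb u i) t * pd 1 (bb u j) t)) * (L^[2*g-(i+j)] f) t) := by
    rw [Finset.mul_sum]
    apply Finset.sum_congr rfl
    intro i hi
    apply congrArg
    apply Finset.sum_congr rfl
    intro j hj
    exact e2 i hi j hj
  rw [e3]
  -- split the three parts
  have e4 : ∀ i ∈ Finset.range (g+1), ∑ j ∈ Finset.range (g+1),
        (bb u i t * bb u j t * (L^[2*g-(i+j)+1] f) t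
        + 2⁻¹ * (bb u i t * pd 1 (bb u j) t - pd 1 (bb u i) t * bb u j t)
            * pd 1 (L^[2*g-(i+j)] f) t
        + (u 1 t * (bb u i t * bb u j t) - 2⁻¹ * (bb u i t * pd 1 (pd 1 (bb u j)) t)
            + 4⁻¹ * (pd 1 (bb u i) t * pd 1 (bb u j) t)) * (L^[2*g-(i+j)] f) t)
      = (∑ j ∈ Finset.range (g+1), bb u i t * bb u j t * (L^[2*g-(i+j)+1] f) t)
        + (∑ j ∈ Finset.range (g+1),
            2⁻¹ * (bb u i t * pd 1 (bb u j) t - pd 1 (bb u i) t * bb u j t)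
              * pd 1 (L^[2*g-(i+j)] f) t)
        + (∑ j ∈ Finset.range (g+1),
            (u 1 t * (bb u i t * bb u j t) - 2⁻¹ * (bb u i t * pd 1 (pd 1 (bb u j)) t)
              + 4⁻¹ * (pd 1 (bb u i) t * pd 1 (bb u j) t)) * (L^[2*g-(i+j)] f) t) := by
    intro i _
    rw [← Finset.sum_add_distrib, ← Finset.sum_add_distrib]
  rw [Finset.sum_congr rfl e4, Finset.sum_add_distrib, Finset.sum_add_distrib]
  -- middle double sum vanishes by antisymmetry
  have emid : ∑ i ∈ Finset.range (g+1), ∑ j ∈ Finset.range (g+1),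
      2⁻¹ * (bb u i t * pd 1 (bb u j) t - pd 1 (bb u i) t * bb u j t)
        * pd 1 (L^[2*g-(i+j)] f) t = 0 :=
    antisym_vanish (g+1) (fun i => bb u i t) (fun i => pd 1 (bb u i) t)
      (fun m => pd 1 (L^[2*g-m] f) t)
  rw [emid]
  -- regroup the two remaining double sums along antidiagonals
  have r1 : ∑ i ∈ Finset.range (g+1), ∑ j ∈ Finset.range (g+1),
      bb u i t * bb u j t * (L^[2*g-(i+j)+1] f) t
      = ∑ n ∈ Finset.range (2*g+2), ∑ p ∈ Finset.HasAntidiagonal.antidiagonal n,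
          bb u p.1 t * bb u p.2 t * (L^[2*g-(p.1+p.2)+1] f) t := by
    apply regroup g (fun i j => bb u i t * bb u j t * (L^[2*g-(i+j)+1] f) t)
    intro i j hij
    rcases hij with h | h
    · rw [bval_out u h t]; ring
    · rw [bval_out u h t]; ring
  have r2 : ∑ i ∈ Finset.range (g+1), ∑ j ∈ Finset.range (g+1),
      (u 1 t * (bb u i t * bb u j t) - 2⁻¹ * (bb u i t * pd 1 (pd 1 (bb u j)) t)
        + 4⁻¹ * (pd 1 (bb u i) t * pd 1 (bb u j) t)) * (L^[2*g-(i+j)] f) t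
      = ∑ n ∈ Finset.range (2*g+2), ∑ p ∈ Finset.HasAntidiagonal.antidiagonal n,
          (u 1 t * (bb u p.1 t * bb u p.2 t) - 2⁻¹ * (bb u p.1 t * pd 1 (pd 1 (bb u p.2)) t)
            + 4⁻¹ * (pd 1 (bb u p.1) t * pd 1 (bb u p.2) t)) * (L^[2*g-(p.1+p.2)] f) t := by
    apply regroup g
    intro i j hij
    rcases hij with h | h
    · rw [bval_out u h t, bval1_out u h t]; ring
    · rw [bval_out u h t, bval1_out u h t, bval2_out u h t]; ring
  rw [r1, r2]
  -- factor the iterate out of each antidiagonal sum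
  have s1 : ∀ n ∈ Finset.range (2*g+2), ∑ p ∈ Finset.HasAntidiagonal.antidiagonal n,
      bb u p.1 t * bb u p.2 t * (L^[2*g-(p.1+p.2)+1] f) t
      = (∑ p ∈ Finset.HasAntidiagonal.antidiagonal n, bb u p.1 t * bb u p.2 t) * (L^[2*g-n+1] f) t := by
    intro n _
    rw [Finset.sum_mul]
    apply Finset.sum_congr rfl
    intro p hp
    rw [Finset.HasAntidiagonal.mem_antidiagonal] at hp
    rw [hp]
  have s2 : ∀ n ∈ Finset.range (2*g+2), ∑ p ∈ Finset.HasAntidiagonal.antidiagonal n,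
      (u 1 t * (bb u p.1 t * bb u p.2 t) - 2⁻¹ * (bb u p.1 t * pd 1 (pd 1 (bb u p.2)) t)
        + 4⁻¹ * (pd 1 (bb u p.1) t * pd 1 (bb u p.2) t)) * (L^[2*g-(p.1+p.2)] f) t
      = (∑ p ∈ Finset.HasAntidiagonal.antidiagonal n,
          (u 1 t * (bb u p.1 t * bb u p.2 t) - 2⁻¹ * (bb u p.1 t * pd 1 (pd 1 (bb u p.2)) t)
            + 4⁻¹ * (pd 1 (bb u p.1) t * pd 1 (bb u p.2) t))) * (L^[2*g-n] f) t := by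
    intro n _
    rw [Finset.sum_mul]
    apply Finset.sum_congr rfl
    intro p hp
    rw [Finset.HasAntidiagonal.mem_antidiagonal] at hp
    rw [hp]
  rw [Finset.sum_congr rfl s1, Finset.sum_congr rfl s2, add_zero,
    ← Finset.sum_add_distrib]
  ring
end layer5

section layer6
variable {g : ℕ}

lemma bval_zero (u : ℕ → (Fin g → ℝ) → ℝ) (t : Fin g → ℝ) : bb u 0 t = 2 := by
  rw [bb_zero]

lemma bval_in (u : ℕ → (Fin g → ℝ) → ℝ) {i : ℕ} (h1 : 1 ≤ i) (h2 : i ≤ g) (t : Fin g → ℝ) :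
    bb u i t = -(u i t) := by rw [bb_in u h1 h2]

lemma bval1_zero (u : ℕ → (Fin g → ℝ) → ℝ) (t : Fin g → ℝ) : pd 1 (bb u 0) t = 0 := by
  rw [bb_zero, pd_constf]

lemma bval1_in (u : ℕ → (Fin g → ℝ) → ℝ) {i : ℕ} (h1 : 1 ≤ i) (h2 : i ≤ g) (t : Fin g → ℝ) :
    pd 1 (bb u i) t = -(pd 1 (u i) t) := by rw [bb_in u h1 h2, pd_neg']

lemma bval2_zero (u : ℕ → (Fin g → ℝ) → ℝ) (t : Fin g → ℝ) : pd 1 (pd 1 (bb u 0)) t = 0 := by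
  rw [bb_zero, pd_constf, pd_constf]

lemma bval2_in (u : ℕ → (Fin g → ℝ) → ℝ) {i : ℕ} (h1 : 1 ≤ i) (h2 : i ≤ g) (t : Fin g → ℝ) :
    pd 1 (pd 1 (bb u i)) t = -(pd 1 (pd 1 (u i)) t) := by
  rw [bb_in u h1 h2, pd_neg', pd_neg']

open Polynomial in
lemma coeff_identity {u : ℕ → (Fin g → ℝ) → ℝ} (hg : 1 ≤ g) (μ : ℕ → ℝ) (t : Fin g → ℝ)
    (h4mu : ∀ ξ : ℝ, ξ ≠ 0 →
      bfu1 u ξ t ^ 2 + 2 * bfu2 u ξ t * (2 - bfu u ξ t)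
        + 4 * (ξ⁻¹ + u 1 t) * (2 - bfu u ξ t) ^ 2
      = 16 * ξ⁻¹ + 4 * ∑ i ∈ Finset.Icc 1 (2*g), μ i * ξ ^ i)
    {n : ℕ} (hn : n ≤ 2*g) :
    (∑ p ∈ Finset.HasAntidiagonal.antidiagonal (n+1), bb u p.1 t * bb u p.2 t)
      + (∑ p ∈ Finset.HasAntidiagonal.antidiagonal n,
          (u 1 t * (bb u p.1 t * bb u p.2 t)
            - 2⁻¹ * (bb u p.1 t * pd 1 (pd 1 (bb u p.2)) t)
            + 4⁻¹ * (pd 1 (bb u p.1) t * pd 1 (bb u p.2) t)))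
      = if 1 ≤ n then μ n else 0 := by
  classical
  set q : ℝ[X] := ∑ i ∈ Finset.range (g+1), C (bb u i t) * X^i with hqdef
  set q1 : ℝ[X] := ∑ i ∈ Finset.range (g+1), C (pd 1 (bb u i) t) * X^i with hq1def
  set q2 : ℝ[X] := ∑ i ∈ Finset.range (g+1), C (pd 1 (pd 1 (bb u i)) t) * X^i with hq2def
  set r : ℝ[X] := C 16 + ∑ i ∈ Finset.Icc 1 (2*g), C (4 * μ i) * X^(i+1) with hrdef
  set PP : ℝ[X] := X*(q1*q1) - C 2 * (X*(q2*q)) + C 4*(q*q) + C (4*(u 1 t))*(X*(q*q)) - r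
    with hpdef
  -- evaluations
  have hq : ∀ ξ : ℝ, q.eval ξ = 2 - bfu u ξ t := by
    intro ξ
    rw [hqdef]
    rw [eval_finset_sum]
    simp only [eval_mul, eval_C, eval_pow, eval_X]
    rw [Finset.sum_range_succ']
    rw [bfu, show Finset.Icc 1 g = Finset.Ico 1 (g+1) from (Finset.Ico_add_one_right_eq_Icc 1 g).symm,
      Finset.sum_Ico_eq_sum_range]
    simp only [Nat.succ_sub_one, Nat.add_sub_cancel, Nat.add_comm 1]
    rw [bval_zero]
    have hbv : ∀ i ∈ Finset.range g, bb u (i+1) t * ξ^(i+1) = -(u (i+1) t * ξ^(i+1)) := by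
      intro i hi
      rw [Finset.mem_range] at hi
      rw [bval_in u (by omega) (by omega) t]
      ring
    rw [Finset.sum_congr rfl hbv, Finset.sum_neg_distrib]
    ring
  have hq1 : ∀ ξ : ℝ, q1.eval ξ = -(bfu1 u ξ t) := by
    intro ξ
    rw [hq1def, eval_finset_sum]
    simp only [eval_mul, eval_C, eval_pow, eval_X]
    rw [Finset.sum_range_succ']
    rw [bfu1, show Finset.Icc 1 g = Finset.Ico 1 (g+1) from (Finset.Ico_add_one_right_eq_Icc 1 g).symm,
      Finset.sum_Ico_eq_sum_range]
    simp only [Nat.succ_sub_one, Nat.add_sub_cancel, Nat.add_comm 1]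
    rw [bval1_zero]
    have hbv : ∀ i ∈ Finset.range g, pd 1 (bb u (i+1)) t * ξ^(i+1)
        = -(pd 1 (u (i+1)) t * ξ^(i+1)) := by
      intro i hi
      rw [Finset.mem_range] at hi
      rw [bval1_in u (by omega) (by omega) t]
      ring
    rw [Finset.sum_congr rfl hbv, Finset.sum_neg_distrib]
    ring
  have hq2 : ∀ ξ : ℝ, q2.eval ξ = -(bfu2 u ξ t) := by
    intro ξ
    rw [hq2def, eval_finset_sum]
    simp only [eval_mul, eval_C, eval_pow, eval_X]
    rw [Finset.sum_range_succ']
    rw [bfu2, show Finset.Icc 1 g = Finset.Ico 1 (g+1) from (Finset.Ico_add_one_right_eq_Icc 1 g).symm,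
      Finset.sum_Ico_eq_sum_range]
    simp only [Nat.succ_sub_one, Nat.add_sub_cancel, Nat.add_comm 1]
    rw [bval2_zero]
    have hbv : ∀ i ∈ Finset.range g, pd 1 (pd 1 (bb u (i+1))) t * ξ^(i+1)
        = -(pd 1 (pd 1 (u (i+1))) t * ξ^(i+1)) := by
      intro i hi
      rw [Finset.mem_range] at hi
      rw [bval2_in u (by omega) (by omega) t]
      ring
    rw [Finset.sum_congr rfl hbv, Finset.sum_neg_distrib]
    ring
  have hsum : ∀ ξ : ℝ, ∑ i ∈ Finset.Icc 1 (2*g), (4 * μ i) * ξ^(i+1)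
      = ξ * (4 * ∑ i ∈ Finset.Icc 1 (2*g), μ i * ξ^i) := by
    intro ξ
    rw [Finset.mul_sum, Finset.mul_sum]
    apply Finset.sum_congr rfl
    intro i _
    ring
  have heval : ∀ ξ : ℝ, ξ ≠ 0 → PP.eval ξ = 0 := by
    intro ξ hξ
    have h4 := h4mu ξ hξ
    have hinv : ξ * ξ⁻¹ = 1 := mul_inv_cancel₀ hξ
    rw [hpdef, hrdef]
    simp only [eval_sub, eval_add, eval_mul, eval_X, eval_C, eval_finset_sum, eval_pow]
    rw [hq ξ, hq1 ξ, hq2 ξ]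
    linear_combination ξ * h4 - (4*(2 - bfu u ξ t)^2 - 16) * hinv - hsum ξ
  have hp0 : PP = 0 := by
    have hsub : {x : ℝ | x ≠ 0} ⊆ {x | PP.IsRoot x} := fun x hx => heval x hx
    have hinf : ({x : ℝ | x ≠ 0}).Infinite :=
      (Set.finite_singleton (0:ℝ)).infinite_compl
    exact Polynomial.eq_zero_of_infinite_isRoot _ (hinf.mono hsub)
  have hcq : ∀ k, q.coeff k = bb u k t := by
    intro k
    rw [hqdef, Polynomial.finset_sum_coeff]
    simp only [Polynomial.coeff_C_mul, Polynomial.coeff_X_pow, mul_ite, mul_one, mul_zero]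
    rw [Finset.sum_ite_eq (Finset.range (g+1)) k (fun i => bb u i t)]
    by_cases hk : k ∈ Finset.range (g+1)
    · rw [if_pos hk]
    · rw [if_neg hk]
      rw [Finset.mem_range] at hk
      exact (bval_out u (by omega) t).symm
  have hcq1 : ∀ k, q1.coeff k = pd 1 (bb u k) t := by
    intro k
    rw [hq1def, Polynomial.finset_sum_coeff]
    simp only [Polynomial.coeff_C_mul, Polynomial.coeff_X_pow, mul_ite, mul_one, mul_zero]
    rw [Finset.sum_ite_eq (Finset.range (g+1)) k (fun i => pd 1 (bb u i) t)]
    by_cases hk : k ∈ Finset.range (g+1)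
    · rw [if_pos hk]
    · rw [if_neg hk]
      rw [Finset.mem_range] at hk
      exact (bval1_out u (by omega) t).symm
  have hcq2 : ∀ k, q2.coeff k = pd 1 (pd 1 (bb u k)) t := by
    intro k
    rw [hq2def, Polynomial.finset_sum_coeff]
    simp only [Polynomial.coeff_C_mul, Polynomial.coeff_X_pow, mul_ite, mul_one, mul_zero]
    rw [Finset.sum_ite_eq (Finset.range (g+1)) k (fun i => pd 1 (pd 1 (bb u i)) t)]
    by_cases hk : k ∈ Finset.range (g+1)
    · rw [if_pos hk]
    · rw [if_neg hk]
      rw [Finset.mem_range] at hk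
      exact (bval2_out u (by omega) t).symm
  have hrco : r.coeff (n+1) = (if 1 ≤ n then 4 * μ n else 0) := by
    rw [hrdef]
    rw [Polynomial.coeff_add, Polynomial.coeff_C, if_neg (by omega : ¬ (n+1 = 0))]
    rw [Polynomial.finset_sum_coeff]
    simp only [Polynomial.coeff_C_mul, Polynomial.coeff_X_pow, mul_ite, mul_one, mul_zero,
      Nat.add_right_cancel_iff]
    rw [zero_add, Finset.sum_ite_eq (Finset.Icc 1 (2*g)) n (fun i => 4 * μ i)]
    by_cases h1n : 1 ≤ n
    · rw [if_pos (Finset.mem_Icc.mpr ⟨h1n, hn⟩), if_pos h1n]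
    · rw [if_neg (fun hmem => h1n (Finset.mem_Icc.mp hmem).1), if_neg h1n]
  have hco : PP.coeff (n+1) = 0 := by rw [hp0, Polynomial.coeff_zero]
  rw [hpdef] at hco
  rw [Polynomial.coeff_sub, Polynomial.coeff_add, Polynomial.coeff_add, Polynomial.coeff_sub,
    Polynomial.coeff_C_mul, Polynomial.coeff_C_mul, Polynomial.coeff_C_mul,
    Polynomial.coeff_X_mul, Polynomial.coeff_X_mul, Polynomial.coeff_X_mul,
    Polynomial.coeff_mul, Polynomial.coeff_mul, Polynomial.coeff_mul, Polynomial.coeff_mul,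
    hrco] at hco
  simp only [hcq, hcq1, hcq2] at hco
  -- symmetrize the q2·q term
  have hswap : ∑ pr ∈ Finset.HasAntidiagonal.antidiagonal n, pd 1 (pd 1 (bb u pr.1)) t * bb u pr.2 t
      = ∑ pr ∈ Finset.HasAntidiagonal.antidiagonal n, bb u pr.1 t * pd 1 (pd 1 (bb u pr.2)) t := by
    rw [anti_swap n (fun a b => pd 1 (pd 1 (bb u a)) t * bb u b t)]
    apply Finset.sum_congr rfl
    intro pr _
    ring
  rw [hswap] at hco
  have hsplit : ∑ pr ∈ Finset.HasAntidiagonal.antidiagonal n,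
      (u 1 t * (bb u pr.1 t * bb u pr.2 t)
        - 2⁻¹ * (bb u pr.1 t * pd 1 (pd 1 (bb u pr.2)) t)
        + 4⁻¹ * (pd 1 (bb u pr.1) t * pd 1 (bb u pr.2) t))
      = u 1 t * (∑ pr ∈ Finset.HasAntidiagonal.antidiagonal n, bb u pr.1 t * bb u pr.2 t)
        - 2⁻¹ * (∑ pr ∈ Finset.HasAntidiagonal.antidiagonal n, bb u pr.1 t * pd 1 (pd 1 (bb u pr.2)) t)
        + 4⁻¹ * (∑ pr ∈ Finset.HasAntidiagonal.antidiagonal n, pd 1 (bb u pr.1) t * pd 1 (bb u pr.2) t) := by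
    rw [Finset.sum_add_distrib, Finset.sum_sub_distrib, ← Finset.mul_sum, ← Finset.mul_sum,
      ← Finset.mul_sum]
  rw [hsplit]
  by_cases h1n : 1 ≤ n
  · rw [if_pos h1n] at hco ⊢
    linear_combination (4:ℝ)⁻¹ * hco
  · rw [if_neg h1n] at hco ⊢
    linear_combination (4:ℝ)⁻¹ * hco
end layer6
/-- Under conditions (i), (ii), (iii) and equation (4mu) with real
constants `μ_1, …, μ_{2g}`, for every smooth `f` one has the operator identity
`4·𝐔(𝐔 f) = 4·𝓛^{2g+1} f + ∑_{i=1}^{2g} μ_i·𝓛^{2g−i} f` where `𝐔 = ∑ 𝓤_i∘𝓛^{g−i}`. -/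
theorem statement6 (g : ℕ) (hg : 1 ≤ g) (u : ℕ → (Fin g → ℝ) → ℝ)
    (hu : ∀ i, ContDiff ℝ (⊤ : ℕ∞) (u i))
    (hcond1 : ∀ k, 1 ≤ k → k ≤ g → ∀ t, pd k (u 1) t = pd 1 (u k) t)
    (hcond2 : ∀ k, 1 ≤ k → k ≤ g → ∀ t,
      4 * pd (k+1) (u 1) t
        = pd 1 (pd 1 (pd 1 (u k))) t - 2 * pd 1 (u 1) t * u k t - 4 * u 1 t * pd 1 (u k) t)
    (hcond3 : ∀ i, 1 ≤ i → i ≤ g → ∀ j, 1 ≤ j → j ≤ g → ∀ t, pd i (u j) t = pd j (u i) t)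
    (hcond4 : ∀ i, 1 ≤ i → i ≤ g → ∀ k, 1 ≤ k → k ≤ g → ∀ t,
      pd 1 (u k) t * u i t - pd 1 (u i) t * u k t
        + 2 * pd (i+1) (u k) t - 2 * pd (k+1) (u i) t = 0)
    (μ : ℕ → ℝ)
    (h4mu : ∀ t, ∀ ξ : ℝ, ξ ≠ 0 →
      bfu1 u ξ t ^ 2 + 2 * bfu2 u ξ t * (2 - bfu u ξ t)
        + 4 * (ξ⁻¹ + u 1 t) * (2 - bfu u ξ t) ^ 2
      = 16 * ξ⁻¹ + 4 * ∑ i ∈ Finset.Icc 1 (2*g), μ i * ξ ^ i) :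
    ∀ f : (Fin g → ℝ) → ℝ, ContDiff ℝ (⊤ : ℕ∞) f → ∀ t,
      4 * ULop u (ULop u f) t
        = 4 * ((opL u)^[2*g + 1] f) t
          + ∑ i ∈ Finset.Icc 1 (2*g), μ i * ((opL u)^[2*g - i] f) t := by
  intro f hf t
  have hUf : ULop u f = Pop u f := funext (ULop_eq_Pop hu hcond1 hf)
  rw [hUf, ULop_eq_Pop hu hcond1 (Pop_smooth hu hf) t, PopPop hu hg hcond1 hcond2 hf t]
  set L := opL u with hL
  rw [Finset.sum_add_distrib]
  have hA0 : (∑ p ∈ Finset.HasAntidiagonal.antidiagonal 0, bb u p.1 t * bb u p.2 t) * (L^[2*g-0+1] f) t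
      = 4 * (L^[2*g+1] f) t := by
    rw [Finset.Nat.antidiagonal_zero, Finset.sum_singleton, bval_zero, Nat.sub_zero]
    norm_num
  have hBtop : (∑ p ∈ Finset.HasAntidiagonal.antidiagonal (2*g+1),
      (u 1 t * (bb u p.1 t * bb u p.2 t)
        - 2⁻¹ * (bb u p.1 t * pd 1 (pd 1 (bb u p.2)) t)
        + 4⁻¹ * (pd 1 (bb u p.1) t * pd 1 (bb u p.2) t))) * (L^[2*g-(2*g+1)] f) t = 0 := by
    rw [Finset.sum_eq_zero, zero_mul]
    intro p hp
    rw [Finset.HasAntidiagonal.mem_antidiagonal] at hp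
    rcases le_or_gt p.1 g with h1 | h1
    · have h2 : g < p.2 := by omega
      rw [bval_out u h2 t, bval1_out u h2 t, bval2_out u h2 t]
      ring
    · rw [bval_out u h1 t, bval1_out u h1 t]
      ring
  have hAe : ∀ n ∈ Finset.range (2*g+1),
      (∑ p ∈ Finset.HasAntidiagonal.antidiagonal (n+1), bb u p.1 t * bb u p.2 t) * (L^[2*g-(n+1)+1] f) t
      = (∑ p ∈ Finset.HasAntidiagonal.antidiagonal (n+1), bb u p.1 t * bb u p.2 t) * (L^[2*g-n] f) t := by
    intro n hn
    rw [Finset.mem_range] at hn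
    rcases lt_or_eq_of_le (by omega : n ≤ 2*g) with hlt | heq
    · rw [show 2*g-(n+1)+1 = 2*g-n from by omega]
    · subst heq
      have hz : ∑ p ∈ Finset.HasAntidiagonal.antidiagonal (2*g+1), bb u p.1 t * bb u p.2 t = 0 := by
        apply Finset.sum_eq_zero
        intro p hp
        rw [Finset.HasAntidiagonal.mem_antidiagonal] at hp
        rcases le_or_gt p.1 g with h1 | h1
        · rw [bval_out u (by omega : g < p.2) t]
          ring
        · rw [bval_out u h1 t]
          ring
      rw [hz, zero_mul, zero_mul]
  have e1 : ∑ n ∈ Finset.range (2*g+2),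
      (∑ p ∈ Finset.HasAntidiagonal.antidiagonal n, bb u p.1 t * bb u p.2 t) * (L^[2*g-n+1] f) t
      = 4 * (L^[2*g+1] f) t + ∑ n ∈ Finset.range (2*g+1),
        (∑ p ∈ Finset.HasAntidiagonal.antidiagonal (n+1), bb u p.1 t * bb u p.2 t) * (L^[2*g-n] f) t := by
    rw [Finset.sum_range_succ', hA0, Finset.sum_congr rfl hAe, add_comm]
  have e2 : ∑ n ∈ Finset.range (2*g+2),
      (∑ p ∈ Finset.HasAntidiagonal.antidiagonal n,
        (u 1 t * (bb u p.1 t * bb u p.2 t)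
          - 2⁻¹ * (bb u p.1 t * pd 1 (pd 1 (bb u p.2)) t)
          + 4⁻¹ * (pd 1 (bb u p.1) t * pd 1 (bb u p.2) t))) * (L^[2*g-n] f) t
      = ∑ n ∈ Finset.range (2*g+1),
      (∑ p ∈ Finset.HasAntidiagonal.antidiagonal n,
        (u 1 t * (bb u p.1 t * bb u p.2 t)
          - 2⁻¹ * (bb u p.1 t * pd 1 (pd 1 (bb u p.2)) t)
          + 4⁻¹ * (pd 1 (bb u p.1) t * pd 1 (bb u p.2) t))) * (L^[2*g-n] f) t := by
    rw [Finset.sum_range_succ, hBtop, add_zero]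
  rw [e1, e2, add_assoc, ← Finset.sum_add_distrib]
  congr 1
  have hterm : ∀ n ∈ Finset.range (2*g+1),
      (∑ p ∈ Finset.HasAntidiagonal.antidiagonal (n+1), bb u p.1 t * bb u p.2 t) * (L^[2*g-n] f) t
        + (∑ p ∈ Finset.HasAntidiagonal.antidiagonal n,
            (u 1 t * (bb u p.1 t * bb u p.2 t)
              - 2⁻¹ * (bb u p.1 t * pd 1 (pd 1 (bb u p.2)) t)
              + 4⁻¹ * (pd 1 (bb u p.1) t * pd 1 (bb u p.2) t))) * (L^[2*g-n] f) t
      = if 1 ≤ n then μ n * (L^[2*g-n] f) t else 0 := by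
    intro n hn
    rw [Finset.mem_range] at hn
    rw [← add_mul, coeff_identity hg μ t (h4mu t) (by omega : n ≤ 2*g)]
    split_ifs
    · rfl
    · rw [zero_mul]
  rw [Finset.sum_congr rfl hterm, ← Finset.sum_filter]
  apply Finset.sum_congr
  · ext n
    simp only [Finset.mem_filter, Finset.mem_range, Finset.mem_Icc]
    omega
  · intro n _
    rfl
end
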